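/- Let d ≥ 1, let H ∈ M_d(ℝ) be symmetric and invertible and let M ∈ M_d(ℝ) be symmetric positive definite. Consider the real (4d)×(4d) block matrix F = [[0, I, 0, 0],[−H, 0, 0, 2M],[0, 0, 0, H],[0, (1/2)M, −I, 0]] (acting on vectors (x,v,ξ,η) ∈ (ℝ^d)^4 by F(x,v,ξ,η) = (v, −Hx + 2Mη, Hη, (1/2)Mv − ξ)). Then: (i) if (x,v,ξ,η) ∈ (ℂ^d)^4 is an eigenvector of F with eigenvalue λ, then (−x,v,ξ,−η) is an eigenvector of F with eigenvalue −λ, so the spectrum of F is centrally symmetric with respect to the origin; (ii) F has no eigenvalue (over ℂ) on the imaginary axis; (iii) F has exactly 2d eigenvalues, counted with algebraic multiplicity, in {Re z > 0} and exactly 2d in {Re z < 0}. -/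

import Mathlib

open Matrix Polynomial

lemma eval_charpoly' {n R : Type*} [Fintype n] [DecidableEq n] [CommRing R]
    (A : Matrix n n R) (b : R) :
    A.charpoly.eval b = (b • (1 : Matrix n n R) - A).det := by
  rw [Matrix.charpoly, ← Polynomial.coe_evalRingHom, RingHom.map_det]
  congr 1
  ext i j
  by_cases h : i = j <;>
    simp [Matrix.charmatrix_apply, Matrix.one_apply, h, Matrix.diagonal_apply]

lemma herm_dot_im {n : Type*} [Fintype n] {A : Matrix n n ℂ} (hA : A.IsHermitian)
    (u : n → ℂ) : (star u ⬝ᵥ A *ᵥ u).im = 0 := by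
  have h1 : star u ⬝ᵥ A *ᵥ u = star (star (A *ᵥ u) ⬝ᵥ u) := Matrix.star_dotProduct _ _
  have h2 : star (A *ᵥ u) ⬝ᵥ u = star u ⬝ᵥ A *ᵥ u := by
    rw [star_mulVec, ← dotProduct_mulVec]
    congr 1
    exact congrArg (fun B => B *ᵥ u) hA.eq
  rw [h2] at h1
  have := congrArg Complex.im h1
  simp only [Complex.star_def, Complex.conj_im] at this
  linarith

lemma self_dot_im {n : Type*} [Fintype n] (u : n → ℂ) : (star u ⬝ᵥ u).im = 0 := by
  have : star u ⬝ᵥ u = star (star u ⬝ᵥ u) := Matrix.star_dotProduct u u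
  have := congrArg Complex.im this
  simp only [Complex.star_def, Complex.conj_im] at this
  linarith

lemma posdef_re {d : ℕ} {M : Matrix (Fin d) (Fin d) ℝ} (hM : M.PosDef)
    {u : Fin d → ℂ} (hu : u ≠ 0) :
    0 < (star u ⬝ᵥ (M.map (fun x : ℝ => (x : ℂ))) *ᵥ u).re := by
  set a : Fin d → ℝ := fun i => (u i).re with ha
  set b : Fin d → ℝ := fun i => (u i).im with hb
  have key : (star u ⬝ᵥ (M.map (fun x : ℝ => (x : ℂ))) *ᵥ u).re
      = a ⬝ᵥ M *ᵥ a + b ⬝ᵥ M *ᵥ b := by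
    simp only [dotProduct, Matrix.mulVec, Complex.re_sum, Matrix.map_apply]
    rw [← Finset.sum_add_distrib]
    apply Finset.sum_congr rfl
    intro i _
    rw [Finset.mul_sum, Complex.re_sum, Finset.mul_sum, Finset.mul_sum, ← Finset.sum_add_distrib]
    apply Finset.sum_congr rfl
    intro j _
    simp only [Pi.star_apply, Complex.star_def, Complex.mul_re, Complex.mul_im,
      Complex.conj_re, Complex.conj_im, Complex.ofReal_re, Complex.ofReal_im, ha, hb]
    ring
  rw [key]
  have hsd : ∀ x : Fin d → ℝ, 0 ≤ x ⬝ᵥ M *ᵥ x := by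
    intro x
    have := hM.posSemidef.dotProduct_mulVec_nonneg x
    simpa using this
  have hab : a ≠ 0 ∨ b ≠ 0 := by
    by_contra h
    push_neg at h
    apply hu
    funext i
    have h1 := congrFun h.1 i
    have h2 := congrFun h.2 i
    simp only [ha, hb, Pi.zero_apply] at h1 h2
    exact Complex.ext h1 h2
  rcases hab with h | h
  · have := hM.dotProduct_mulVec_pos h
    have h2 := hsd b
    simp only [Pi.star_apply, star_trivial] at this
    nlinarith [this]
  · have := hM.dotProduct_mulVec_pos h
    have h2 := hsd a
    simp only [Pi.star_apply, star_trivial] at this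
    nlinarith [this]

lemma herm_map {d : ℕ} {H : Matrix (Fin d) (Fin d) ℝ} (hH : H.IsHermitian) :
    (H.map (fun x : ℝ => (x : ℂ))).IsHermitian :=
  hH.map _ (fun x => by simp [Complex.star_def])

lemma inv_map_mulVec {d : ℕ} {H : Matrix (Fin d) (Fin d) ℝ} (hH : IsUnit H)
    {u : Fin d → ℂ} (h : (H.map (fun x : ℝ => (x : ℂ))) *ᵥ u = 0) : u = 0 := by
  by_contra hu
  have hdet : ((H.map (fun x : ℝ => (x : ℂ)))).det = 0 :=
    (Matrix.exists_mulVec_eq_zero_iff).mp ⟨u, hu, h⟩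
  have : IsUnit (H.map (fun x : ℝ => (x : ℂ))) := by
    have := hH.map (Complex.ofRealHom.mapMatrix :
      Matrix (Fin d) (Fin d) ℝ →+* Matrix (Fin d) (Fin d) ℂ)
    exact this
  have := (Matrix.isUnit_iff_isUnit_det _).mp this
  rw [hdet] at this
  simpa using this

lemma key_no_imag {d : ℕ} {H M : Matrix (Fin d) (Fin d) ℝ}
    (hH : H.IsHermitian) (hM : M.PosDef) {s : ℂ} (hs : s.re = 0) (hs0 : s ≠ 0)
    {u : Fin d → ℂ} (hu : u ≠ 0)
    (heq : (H.map (fun x : ℝ => (x : ℂ))) *ᵥ u + s ^ 2 • u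
      = s • ((M.map (fun x : ℝ => (x : ℂ))) *ᵥ u)) : False := by
  have hdot := congrArg (fun y => star u ⬝ᵥ y) heq
  simp only [dotProduct_add, dotProduct_smul, smul_eq_mul] at hdot
  have ha := herm_dot_im (herm_map hH) u
  have hb := self_dot_im u
  have hg := posdef_re hM hu
  have him := congrArg Complex.im hdot
  have hs2re : (s ^ 2).re = - s.im ^ 2 := by
    simp [pow_two, Complex.mul_re, hs]
  have hs2im : (s ^ 2).im = 0 := by
    simp [pow_two, Complex.mul_im, hs]
  have hsim : s.im ≠ 0 := by
    intro h
    exact hs0 (Complex.ext hs h)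
  simp only [Complex.add_im, Complex.mul_im, ha, hb, hs2im, hs, Complex.mul_re] at him
  ring_nf at him
  have h0 : s.im * (star u ⬝ᵥ (M.map fun x : ℝ => (x:ℂ)) *ᵥ u).re ≠ 0 :=
    mul_ne_zero hsim (ne_of_gt hg)
  exact h0 him.symm

lemma count_roots_neg {p : Polynomial ℂ} (hp : p ≠ 0)
    (he : ∀ z : ℂ, p.eval (-z) = p.eval z) (a : ℂ) :
    p.roots.count (-a) = p.roots.count a := by
  have hcompeq : p.comp (-X) = p := by
    apply Polynomial.funext
    intro r
    rw [Polynomial.eval_comp]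
    simp [he r]
  have key : ∀ b : ℂ, p.rootMultiplicity b ≤ p.rootMultiplicity (-b) := by
    intro b
    set k := p.rootMultiplicity b with hk
    have h1 : (X - C b) ^ k ∣ p := Polynomial.pow_rootMultiplicity_dvd p b
    have h2 : ((X - C b) ^ k).comp (-X) ∣ p.comp (-X) := by
      obtain ⟨c, hc⟩ := h1
      exact ⟨c.comp (-X), by rw [hc, Polynomial.mul_comp]⟩
    rw [hcompeq] at h2
    have h3 : ((X - C b) ^ k).comp (-X) = (-(X - C (-b))) ^ k := by
      rw [Polynomial.pow_comp, Polynomial.sub_comp, Polynomial.X_comp, Polynomial.C_comp]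
      ring_nf
      rw [Polynomial.C_neg]
      ring
    have h4 : (X - C (-b)) ^ k ∣ (-(X - C (-b))) ^ k :=
      ⟨(-1) ^ k, by rw [neg_pow, mul_comm]⟩
    rw [h3] at h2
    exact (Polynomial.le_rootMultiplicity_iff hp).mpr (h4.trans h2)
  rw [Polynomial.count_roots, Polynomial.count_roots]
  exact le_antisymm (by simpa using key (-a)) (key a)

lemma no_imag_eigen {d : ℕ} (H M : Matrix (Fin d) (Fin d) ℝ)
    (hH : H.IsHermitian) (hHinv : IsUnit H) (hM : M.PosDef) {z : ℂ} (hz : z.re = 0)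
    {w : ((Fin d ⊕ Fin d) ⊕ (Fin d ⊕ Fin d)) → ℂ} (hw : w ≠ 0)
    (heig : (Matrix.fromBlocks
      (Matrix.fromBlocks 0 1 (-(H.map (fun x : ℝ => (x : ℂ)))) 0)
      (Matrix.fromBlocks 0 0 0 ((2 : ℂ) • (M.map (fun x : ℝ => (x : ℂ)))))
      (Matrix.fromBlocks 0 0 0 ((2⁻¹ : ℂ) • (M.map (fun x : ℝ => (x : ℂ)))))
      (Matrix.fromBlocks 0 (H.map (fun x : ℝ => (x : ℂ))) (-1) 0)) *ᵥ w = z • w) :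
    False := by
  set Hc := H.map (fun x : ℝ => (x : ℂ)) with hHc
  set Mc := M.map (fun x : ℝ => (x : ℂ)) with hMc
  set x : Fin d → ℂ := fun j => w (Sum.inl (Sum.inl j)) with hx
  set v : Fin d → ℂ := fun j => w (Sum.inl (Sum.inr j)) with hv
  set ξ : Fin d → ℂ := fun j => w (Sum.inr (Sum.inl j)) with hξ
  set η : Fin d → ℂ := fun j => w (Sum.inr (Sum.inr j)) with hη
  have hw0 : w = Sum.elim (Sum.elim x v) (Sum.elim ξ η) := by
    funext s
    rcases s with (j | j) | (j | j) <;> rfl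
  rw [hw0] at heig
  have e1 : ∀ j, v j = z * x j := by
    intro j
    have := congrFun heig (Sum.inl (Sum.inl j))
    simpa [Matrix.fromBlocks_mulVec, Matrix.neg_mulVec, Matrix.smul_mulVec] using this
  have e2 : ∀ j, -((Hc *ᵥ x) j) + 2 * (Mc *ᵥ η) j = z * v j := by
    intro j
    have := congrFun heig (Sum.inl (Sum.inr j))
    simpa [Matrix.fromBlocks_mulVec, Matrix.neg_mulVec, Matrix.smul_mulVec] using this
  have e3 : ∀ j, (Hc *ᵥ η) j = z * ξ j := by
    intro j
    have := congrFun heig (Sum.inr (Sum.inl j))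
    simpa [Matrix.fromBlocks_mulVec, Matrix.neg_mulVec, Matrix.smul_mulVec] using this
  have e4 : ∀ j, 2⁻¹ * (Mc *ᵥ v) j - ξ j = z * η j := by
    intro j
    have := congrFun heig (Sum.inr (Sum.inr j))
    simpa [Matrix.fromBlocks_mulVec, Matrix.neg_mulVec, Matrix.smul_mulVec,
      sub_eq_add_neg] using this
  have hmv : ∀ j, (Mc *ᵥ v) j = z * (Mc *ᵥ x) j := by
    intro j
    have hveq : v = z • x := funext fun j => by simpa using e1 j
    rw [hveq, Matrix.mulVec_smul]
    simp
  have E1 : ∀ j, (Hc *ᵥ x) j + z ^ 2 * x j = 2 * (Mc *ᵥ η) j := by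
    intro j
    have h2 := e2 j
    rw [e1 j] at h2
    linear_combination -h2
  have E2 : ∀ j, (Hc *ᵥ η) j + z ^ 2 * η j = (z ^ 2 * 2⁻¹) * (Mc *ᵥ x) j := by
    intro j
    have h3 := e3 j
    have h4 := e4 j
    rw [hmv j] at h4
    linear_combination h3 - z * h4
  have wzero : x = 0 → η = 0 → False := by
    intro hx0 hη0
    apply hw
    rw [hw0, hx0, hη0]
    have hv0 : v = 0 := funext fun j => by rw [e1 j, congrFun hx0 j]; simp
    have hξ0 : ξ = 0 := by
      funext j
      have h4 := e4 j
      rw [hv0, hη0] at h4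
      simp only [Matrix.mulVec_zero, Pi.zero_apply, mul_zero, zero_sub, neg_eq_zero] at h4
      simpa using h4
    rw [hv0, hξ0]
    funext s
    rcases s with (j | j) | (j | j) <;> rfl
  by_cases hz0 : z = 0
  · subst hz0
    have hη0 : η = 0 := by
      apply inv_map_mulVec hHinv
      funext j
      have := E2 j
      simpa using this
    have hx0 : x = 0 := by
      apply inv_map_mulVec hHinv
      funext j
      have := E1 j
      rw [hη0] at this
      simpa using this
    exact wzero hx0 hη0
  · set u : Fin d → ℂ := z • x + (2 : ℂ) • η with hu
    set w' : Fin d → ℂ := z • x - (2 : ℂ) • η with hw'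
    have hequ : Hc *ᵥ u + z ^ 2 • u = z • (Mc *ᵥ u) := by
      funext j
      simp only [hu, Matrix.mulVec_add, Matrix.mulVec_smul, Pi.add_apply, Pi.smul_apply,
        smul_eq_mul]
      linear_combination z * E1 j + 2 * E2 j
    have heqw : Hc *ᵥ w' + (-z) ^ 2 • w' = (-z) • (Mc *ᵥ w') := by
      funext j
      simp only [hw', Matrix.mulVec_sub, Matrix.mulVec_smul, Pi.sub_apply, Pi.add_apply,
        Pi.smul_apply, smul_eq_mul, neg_sq]
      linear_combination z * E1 j - 2 * E2 j
    by_cases huz : u = 0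
    · by_cases hwz : w' = 0
      · apply wzero
        · funext j
          have h1 := congrFun huz j
          have h2 := congrFun hwz j
          simp only [hu, hw', Pi.add_apply, Pi.sub_apply, Pi.smul_apply, smul_eq_mul,
            Pi.zero_apply] at h1 h2
          have hzx : z * x j = 0 := by linear_combination (h1 + h2) / 2
          simp only [Pi.zero_apply]
          exact (mul_eq_zero.mp hzx).resolve_left hz0
        · funext j
          have h1 := congrFun huz j
          have h2 := congrFun hwz j
          simp only [hu, hw', Pi.add_apply, Pi.sub_apply, Pi.smul_apply, smul_eq_mul,
            Pi.zero_apply] at h1 h2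
          simp only [Pi.zero_apply]
          linear_combination (h1 - h2) / 4
      · exact key_no_imag hH hM (by simp [hz]) (neg_ne_zero.mpr hz0) hwz heqw
    · exact key_no_imag hH hM hz hz0 huz hequ

/-- Let `H` be a real symmetric invertible `d × d` matrix and `M` symmetric
positive definite. Consider the `4d × 4d` real block matrix
`F = [[0, I, 0, 0], [-H, 0, 0, 2M], [0, 0, 0, H], [0, (1/2)M, -I, 0]]`.
Then: (i) if `w` is an eigenvector of `F` (over `ℂ`) with eigenvalue `λ`, then the vector
`(-x, v, ξ, -η)` is an eigenvector with eigenvalue `-λ`, so the spectrum of `F` is centrally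
symmetric; (ii) `F` has no eigenvalue on the imaginary axis; (iii) `F` has exactly `2d`
eigenvalues (with algebraic multiplicity) in `{Re z > 0}` and exactly `2d` in `{Re z < 0}`. -/
theorem stmt_2 (d : ℕ) (hd : 1 ≤ d)
    (H M : Matrix (Fin d) (Fin d) ℝ)
    (hHsymm : H.IsHermitian) (hHinv : IsUnit H) (hM : M.PosDef)
    (F : Matrix ((Fin d ⊕ Fin d) ⊕ (Fin d ⊕ Fin d)) ((Fin d ⊕ Fin d) ⊕ (Fin d ⊕ Fin d)) ℝ)
    (hF : F = Matrix.fromBlocks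
      (Matrix.fromBlocks 0 1 (-H) 0)
      (Matrix.fromBlocks 0 0 0 ((2 : ℝ) • M))
      (Matrix.fromBlocks 0 0 0 ((1/2 : ℝ) • M))
      (Matrix.fromBlocks 0 H (-1) 0)) :
    (∀ (lam : ℂ) (w : ((Fin d ⊕ Fin d) ⊕ (Fin d ⊕ Fin d)) → ℂ),
      w ≠ 0 →
      (F.map (fun x : ℝ => (x : ℂ))).mulVec w = lam • w →
      (Sum.elim
          (Sum.elim (fun j => -(w (Sum.inl (Sum.inl j)))) (fun j => w (Sum.inl (Sum.inr j))))
          (Sum.elim (fun j => w (Sum.inr (Sum.inl j))) (fun j => -(w (Sum.inr (Sum.inr j)))))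
          ≠ (0 : ((Fin d ⊕ Fin d) ⊕ (Fin d ⊕ Fin d)) → ℂ)) ∧
      (F.map (fun x : ℝ => (x : ℂ))).mulVec
        (Sum.elim
          (Sum.elim (fun j => -(w (Sum.inl (Sum.inl j)))) (fun j => w (Sum.inl (Sum.inr j))))
          (Sum.elim (fun j => w (Sum.inr (Sum.inl j))) (fun j => -(w (Sum.inr (Sum.inr j))))))
        = (-lam) • (Sum.elim
          (Sum.elim (fun j => -(w (Sum.inl (Sum.inl j)))) (fun j => w (Sum.inl (Sum.inr j))))
          (Sum.elim (fun j => w (Sum.inr (Sum.inl j))) (fun j => -(w (Sum.inr (Sum.inr j))))))) ∧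
    (∀ z ∈ (F.map (fun x : ℝ => (x : ℂ))).charpoly.roots,
      -z ∈ (F.map (fun x : ℝ => (x : ℂ))).charpoly.roots) ∧
    (∀ z ∈ (F.map (fun x : ℝ => (x : ℂ))).charpoly.roots, z.re ≠ 0) ∧
    ((F.map (fun x : ℝ => (x : ℂ))).charpoly.roots.filter (fun z => 0 < z.re)).card = 2 * d ∧
    ((F.map (fun x : ℝ => (x : ℂ))).charpoly.roots.filter (fun z => z.re < 0)).card = 2 * d := by
  set Hc := H.map (fun x : ℝ => (x : ℂ)) with hHcdef
  set Mc := M.map (fun x : ℝ => (x : ℂ)) with hMcdef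
  set Fc := F.map (fun x : ℝ => (x : ℂ)) with hFcdef
  have hFc : Fc = Matrix.fromBlocks
      (Matrix.fromBlocks 0 1 (-Hc) 0)
      (Matrix.fromBlocks 0 0 0 ((2 : ℂ) • Mc))
      (Matrix.fromBlocks 0 0 0 ((2⁻¹ : ℂ) • Mc))
      (Matrix.fromBlocks 0 Hc (-1) 0) := by
    rw [hFcdef, hF]
    ext i j
    rcases i with (i | i) | (i | i) <;> rcases j with (j | j) | (j | j) <;>
      simp [Matrix.fromBlocks, Matrix.map_apply, Matrix.one_apply, apply_ite,
        hHcdef, hMcdef, Matrix.smul_apply, Complex.ofReal_mul, smul_eq_mul] <;>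
      norm_num
  set Sc : Matrix ((Fin d ⊕ Fin d) ⊕ (Fin d ⊕ Fin d)) ((Fin d ⊕ Fin d) ⊕ (Fin d ⊕ Fin d)) ℂ :=
      Matrix.fromBlocks (Matrix.fromBlocks (-1) 0 0 1) 0 0 (Matrix.fromBlocks 1 0 0 (-1))
      with hScdef
  have hSS : Sc * Sc = 1 := by
    rw [hScdef]
    simp [Matrix.fromBlocks_multiply, Matrix.fromBlocks_one]
  have hSFS : Sc * Fc * Sc = -Fc := by
    rw [hScdef, hFc]
    simp [Matrix.fromBlocks_multiply, Matrix.fromBlocks_neg, Matrix.mul_smul, Matrix.smul_mul]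
  have hp0 : Fc.charpoly ≠ 0 := (Matrix.charpoly_monic Fc).ne_zero
  have hdetSS : Sc.det * Sc.det = 1 := by rw [← Matrix.det_mul, hSS, Matrix.det_one]
  have hcardK : Fintype.card ((Fin d ⊕ Fin d) ⊕ (Fin d ⊕ Fin d)) = 4 * d := by
    simp [Fintype.card_sum]
    ring
  have heval : ∀ z : ℂ, Fc.charpoly.eval (-z) = Fc.charpoly.eval z := by
    intro z
    rw [eval_charpoly', eval_charpoly']
    have h1 : Sc * ((-z) • 1 - Fc) * Sc = -(z • 1 - Fc) := by
      rw [Matrix.mul_sub, Matrix.sub_mul, Matrix.mul_smul, Matrix.smul_mul, mul_one, hSS, hSFS]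
      rw [neg_smul]
      abel
    have h2 : ((-z) • 1 - Fc).det = (Sc * ((-z) • 1 - Fc) * Sc).det := by
      rw [Matrix.det_mul, Matrix.det_mul]
      calc ((-z) • 1 - Fc).det = (Sc.det * Sc.det) * ((-z) • 1 - Fc).det := by
            rw [hdetSS, one_mul]
        _ = Sc.det * ((-z) • 1 - Fc).det * Sc.det := by ring
    rw [h2, h1, Matrix.det_neg, hcardK]
    have h3 : ((-1 : ℂ)) ^ (4 * d) = 1 := Even.neg_one_pow ⟨2 * d, by ring⟩
    rw [h3, one_mul]
  -- no eigenvalue on the imaginary axis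
  have hnoimag : ∀ z ∈ Fc.charpoly.roots, z.re ≠ 0 := by
    intro z hz hre
    have hev : Fc.charpoly.eval z = 0 := by
      have := (Polynomial.mem_roots hp0).mp hz
      exact this
    rw [eval_charpoly'] at hev
    obtain ⟨w, hw, hmul⟩ := (Matrix.exists_mulVec_eq_zero_iff).mpr hev
    have heig : Fc *ᵥ w = z • w := by
      rw [Matrix.sub_mulVec, Matrix.smul_mulVec, Matrix.one_mulVec, sub_eq_zero] at hmul
      exact hmul.symm
    rw [hFc] at heig
    exact no_imag_eigen H M hHsymm hHinv hM hre hw heig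
  -- cardinality of roots
  have hsplits : Fc.charpoly.roots.card = 4 * d := by
    rw [← hcardK, ← Matrix.charpoly_natDegree_eq_dim Fc]
    exact (Polynomial.splits_iff_card_roots).mp (IsAlgClosed.splits _)
  have hmapneg : Fc.charpoly.roots.map (fun z => -z) = Fc.charpoly.roots := by
    apply Multiset.ext.mpr
    intro a
    have h1 := Multiset.count_map_eq_count' (fun z : ℂ => -z) Fc.charpoly.roots
      neg_injective (-a)
    simp only [neg_neg] at h1
    rw [h1]
    exact count_roots_neg hp0 heval a
  have hfneg : (Fc.charpoly.roots.filter (fun z => z.re < 0)).card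
      = (Fc.charpoly.roots.filter (fun z => 0 < z.re)).card := by
    conv_lhs => rw [← hmapneg]
    rw [Multiset.filter_map, Multiset.card_map]
    congr 1
    apply Multiset.filter_congr
    intro z _
    simp only [Function.comp_apply, Complex.neg_re, neg_neg]
    constructor
    · intro h; linarith
    · intro h; linarith
  have hfsum : (Fc.charpoly.roots.filter (fun z => 0 < z.re)).card
      + (Fc.charpoly.roots.filter (fun z => z.re < 0)).card = 4 * d := by
    rw [← hsplits]
    have hfilt : Multiset.filter (fun a : ℂ => ¬ 0 < a.re) Fc.charpoly.roots
        = Multiset.filter (fun z : ℂ => z.re < 0) Fc.charpoly.roots := by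
      apply Multiset.filter_congr
      intro z hzm
      have hne := hnoimag z hzm
      constructor
      · intro h
        push_neg at h
        exact lt_of_le_of_ne h hne
      · intro h
        exact not_lt.mpr (le_of_lt h)
    have hadd := Multiset.filter_add_not (fun z : ℂ => 0 < z.re) Fc.charpoly.roots
    rw [hfilt] at hadd
    conv_rhs => rw [← hadd]
    rw [Multiset.card_add]
  refine ⟨?_, ?_, ?_, ?_, ?_⟩
  · -- part (i)
    intro lam w hw hmul
    set y : ((Fin d ⊕ Fin d) ⊕ (Fin d ⊕ Fin d)) → ℂ := Sum.elim
      (Sum.elim (fun j => -(w (Sum.inl (Sum.inl j)))) (fun j => w (Sum.inl (Sum.inr j))))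
      (Sum.elim (fun j => w (Sum.inr (Sum.inl j))) (fun j => -(w (Sum.inr (Sum.inr j)))))
      with hydef
    have hy : y = Sc *ᵥ w := by
      have hwrep : w = Sum.elim
          (Sum.elim (fun j => w (Sum.inl (Sum.inl j))) (fun j => w (Sum.inl (Sum.inr j))))
          (Sum.elim (fun j => w (Sum.inr (Sum.inl j))) (fun j => w (Sum.inr (Sum.inr j)))) := by
        funext s
        rcases s with (j | j) | (j | j) <;> rfl
      rw [hScdef]
      conv_rhs => rw [hwrep]
      funext s
      rcases s with (j | j) | (j | j) <;>
        simp [Matrix.fromBlocks_mulVec, Matrix.neg_mulVec, hydef]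
    have hFS : Fc * Sc = -(Sc * Fc) := by
      have h1 : Sc * (Sc * Fc * Sc) = Sc * (-Fc) := by rw [hSFS]
      rw [← Matrix.mul_assoc, ← Matrix.mul_assoc, hSS, Matrix.one_mul, Matrix.mul_neg] at h1
      exact h1
    constructor
    · intro h0
      apply hw
      have : Sc *ᵥ y = w := by
        rw [hy, Matrix.mulVec_mulVec, hSS, Matrix.one_mulVec]
      rw [← this, h0, Matrix.mulVec_zero]
    · rw [hy, Matrix.mulVec_mulVec, hFS, Matrix.neg_mulVec, ← Matrix.mulVec_mulVec,
        hmul, Matrix.mulVec_smul, neg_smul]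
  · -- central symmetry of roots
    intro z hz
    rw [Polynomial.mem_roots hp0] at hz ⊢
    rw [Polynomial.IsRoot, heval z]
    exact hz
  · exact hnoimag
  · omega
  · omega
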